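/- Let r : [0,∞) → ℝ be continuous and strictly positive, and for t > 0 define the geometric mean failure rate G(t) = exp((1/t)∫₀ᵗ ln r(u) du) and the geometric aging intensity L^G(t) = r(t)/G(t). Then G is monotone non-decreasing (respectively non-increasing) on (0,∞) if and only if L^G(t) ≥ 1 (respectively L^G(t) ≤ 1) for all t > 0. -/

import Mathlib

open Set Filter

private lemma deriv_nonneg_of_monotoneOn_aux {g : ℝ → ℝ} {d t : ℝ} (ht : 0 < t)
    (hm : MonotoneOn g (Set.Ioi 0)) (hd : HasDerivAt g d t) : 0 ≤ d := by
  have hslope : Filter.Tendsto (slope g t) (nhdsWithin t (Set.Ioi t)) (nhds d) :=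
    (hasDerivAt_iff_tendsto_slope.mp hd).mono_left
      (nhdsWithin_mono t (fun x hx => ne_of_gt hx))
  refine ge_of_tendsto hslope ?_
  filter_upwards [self_mem_nhdsWithin] with x hx
  have hx' : t < x := hx
  have h1 : g t ≤ g x := hm ht (ht.trans hx') hx'.le
  have : (0:ℝ) ≤ (g x - g t) / (x - t) :=
    div_nonneg (by linarith) (by linarith)
  simpa [slope_def_field] using this

theorem geometric_aging_intensity_characterization
    (r : ℝ → ℝ) (hc : ContinuousOn r (Set.Ici 0))
    (hpos : ∀ u ∈ Set.Ici (0 : ℝ), 0 < r u) :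
    (MonotoneOn (fun t => Real.exp ((1 / t) * ∫ u in (0:ℝ)..t, Real.log (r u)))
        (Set.Ioi 0) ↔
      ∀ t > (0:ℝ),
        (1:ℝ) ≤ r t / Real.exp ((1 / t) * ∫ u in (0:ℝ)..t, Real.log (r u))) ∧
    (AntitoneOn (fun t => Real.exp ((1 / t) * ∫ u in (0:ℝ)..t, Real.log (r u)))
        (Set.Ioi 0) ↔
      ∀ t > (0:ℝ),
        r t / Real.exp ((1 / t) * ∫ u in (0:ℝ)..t, Real.log (r u)) ≤ 1) := by
  set f : ℝ → ℝ := fun u => Real.log (r u) with hf_def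
  set F : ℝ → ℝ := fun t => ∫ u in (0:ℝ)..t, f u with hF_def
  set g : ℝ → ℝ := fun t => (1 / t) * F t with hg_def
  have hflog : ContinuousOn f (Set.Ici 0) :=
    hc.log (fun x hx => (hpos x hx).ne')
  -- derivative of F
  have hF : ∀ t ∈ Set.Ioi (0:ℝ), HasDerivAt F (f t) t := by
    intro t ht
    have ht' : (0:ℝ) < t := ht
    refine intervalIntegral.integral_hasDerivAt_right ?_ ?_ ?_
    · apply ContinuousOn.intervalIntegrable
      apply hflog.mono
      rw [Set.uIcc_of_le ht'.le]
      exact fun x hx => hx.1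
    · exact (hflog.mono (Set.Ioi_subset_Ici le_rfl)).stronglyMeasurableAtFilter
        isOpen_Ioi t ht
    · exact hflog.continuousAt (Ici_mem_nhds ht')
  -- derivative of g
  have hg : ∀ t ∈ Set.Ioi (0:ℝ), HasDerivAt g ((f t - g t) / t) t := by
    intro t ht
    have ht' : (0:ℝ) < t := ht
    have h1 : HasDerivAt (fun t : ℝ => 1 / t) (-(1 / t ^ 2)) t := by
      simpa using (hasDerivAt_inv ht'.ne')
    have := h1.mul (hF t ht)
    refine this.congr_deriv ?_
    simp only [hg_def]
    field_simp
    ring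
  have hGder : ∀ t ∈ Set.Ioi (0:ℝ),
      HasDerivAt (fun t => Real.exp (g t)) (Real.exp (g t) * ((f t - g t) / t)) t :=
    fun t ht => (Real.hasDerivAt_exp (g t)).comp t (hg t ht)
  -- key equivalence: 1 ≤ r t / exp (g t) ↔ g t ≤ f t
  have hkey : ∀ t ∈ Set.Ioi (0:ℝ),
      ((1:ℝ) ≤ r t / Real.exp (g t) ↔ g t ≤ f t) := by
    intro t ht
    have hrt : 0 < r t := hpos t (Set.Ioi_subset_Ici_self ht)
    rw [le_div_iff₀ (Real.exp_pos _), one_mul, hf_def]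
    exact (Real.le_log_iff_exp_le hrt).symm
  have hkey' : ∀ t ∈ Set.Ioi (0:ℝ),
      (r t / Real.exp (g t) ≤ 1 ↔ f t ≤ g t) := by
    intro t ht
    have hrt : 0 < r t := hpos t (Set.Ioi_subset_Ici_self ht)
    rw [div_le_one (Real.exp_pos _), hf_def]
    exact (Real.log_le_iff_le_exp hrt).symm
  constructor
  · constructor
    · intro hmono t ht
      rw [hkey t ht]
      have hd := hGder t ht
      have hnn : 0 ≤ Real.exp (g t) * ((f t - g t) / t) :=
        deriv_nonneg_of_monotoneOn_aux ht hmono hd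
      have ht' : (0:ℝ) < t := ht
      have h3 : 0 ≤ (f t - g t) / t :=
        (mul_nonneg_iff_of_pos_left (Real.exp_pos (g t))).mp hnn
      have h4 := mul_nonneg h3 ht'.le
      rw [div_mul_cancel₀ _ ht'.ne'] at h4
      linarith
    · intro h
      apply monotoneOn_of_deriv_nonneg (convex_Ioi 0)
      · exact fun t ht => (hGder t ht).continuousAt.continuousWithinAt
      · intro t ht
        rw [interior_Ioi] at ht
        exact (hGder t ht).differentiableAt.differentiableWithinAt
      · intro t ht
        rw [interior_Ioi] at ht
        rw [(hGder t ht).deriv]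
        have hgf : g t ≤ f t := (hkey t ht).mp (h t ht)
        have ht' : (0:ℝ) < t := ht
        exact mul_nonneg (Real.exp_pos _).le (div_nonneg (by linarith) ht'.le)
  · constructor
    · intro hanti t ht
      rw [hkey' t ht]
      have hd := (hGder t ht).neg
      have hmono : MonotoneOn (fun t => -(Real.exp (g t))) (Set.Ioi 0) := hanti.neg
      have hnn : 0 ≤ -(Real.exp (g t) * ((f t - g t) / t)) :=
        deriv_nonneg_of_monotoneOn_aux ht hmono hd
      have ht' : (0:ℝ) < t := ht
      rw [neg_nonneg] at hnn
      have h3 : (f t - g t) / t ≤ 0 := by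
        by_contra hcon
        push_neg at hcon
        nlinarith [Real.exp_pos (g t)]
      have h4 := mul_nonpos_of_nonpos_of_nonneg h3 ht'.le
      rw [div_mul_cancel₀ _ ht'.ne'] at h4
      linarith
    · intro h
      apply antitoneOn_of_deriv_nonpos (convex_Ioi 0)
      · exact fun t ht => (hGder t ht).continuousAt.continuousWithinAt
      · intro t ht
        rw [interior_Ioi] at ht
        exact (hGder t ht).differentiableAt.differentiableWithinAt
      · intro t ht
        rw [interior_Ioi] at ht
        rw [(hGder t ht).deriv]
        have hgf : f t ≤ g t := (hkey' t ht).mp (h t ht)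
        have ht' : (0:ℝ) < t := ht
        have : (f t - g t) / t ≤ 0 := div_nonpos_of_nonpos_of_nonneg (by linarith) ht'.le
        exact mul_nonpos_of_nonneg_of_nonpos (Real.exp_pos _).le this
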